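/- On the subspace {x : p₁₂x₁ + p₂₂x₂ = 0}, the Lie derivative L_F W(x) of W = (1+θσ(x₁))V(x) - k along F(x) = (x₂, f(x)) equals -(p₁₂·det(P)/p₂₂²)·x₁²·[θσ(x₁)(1 - (l/2)(1-σ(x₁))x₁) + 1], and hence is strictly negative for all nonzero such x whenever p₁₂ > 0, det(P) > 0, and 1 - (l/2)(1-σ(x₁))x₁ > 0. -/

import Mathlib

/-- On the subspace `p₁₂x₁ + p₂₂x₂ = 0`, the Lie derivative `L_F W` of
`W = (1+θσ(x₁))V - k` along `F(x) = (x₂, f(x))` equals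
`-(p₁₂ det P/p₂₂²)·x₁²·[θσ(x₁)(1-(l/2)(1-σ(x₁))x₁)+1]`, hence is negative
for nonzero such `x` whenever `1 - (l/2)(1-σ(x₁))x₁ > 0`. -/
theorem LFW_on_subspace (p₁₁ p₁₂ p₂₂ l d δ θ k : ℝ) (f : ℝ → ℝ → ℝ)
    (hp₁₂ : 0 < p₁₂) (hp₂₂ : 0 < p₂₂) (hdet : 0 < p₁₁ * p₂₂ - p₁₂ ^ 2)
    (hl : 0 < l) (hθ : 0 < θ)
    (σ : ℝ → ℝ) (hσ : ∀ x₁, σ x₁ = 1 / (1 + Real.exp (l * (x₁ - d - δ / 2))))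
    (W : ℝ → ℝ → ℝ)
    (hW : ∀ x₁ x₂, W x₁ x₂ =
      (1 + θ * σ x₁) * ((p₁₁ * x₁ ^ 2 + 2 * p₁₂ * x₁ * x₂ + p₂₂ * x₂ ^ 2) / 2) - k) :
    ∀ x₁ x₂ : ℝ, x₂ = -(p₁₂ / p₂₂) * x₁ →
      (deriv (fun t => W t x₂) x₁) * x₂ + (deriv (fun t => W x₁ t) x₂) * f x₁ x₂ =
        -(p₁₂ * (p₁₁ * p₂₂ - p₁₂ ^ 2) / p₂₂ ^ 2) * x₁ ^ 2 *
          (θ * σ x₁ * (1 - (l / 2) * (1 - σ x₁) * x₁) + 1) ∧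
      (x₁ ≠ 0 → 1 - (l / 2) * (1 - σ x₁) * x₁ > 0 →
        (deriv (fun t => W t x₂) x₁) * x₂ + (deriv (fun t => W x₁ t) x₂) * f x₁ x₂ < 0) := by
  intro x₁ x₂ hx₂
  have hp₂₂' : p₂₂ ≠ 0 := ne_of_gt hp₂₂
  set E := Real.exp (l * (x₁ - d - δ / 2)) with hE
  have hEpos : 0 < E := Real.exp_pos _
  have hden : (1 : ℝ) + E ≠ 0 := by positivity
  have hσfun : σ = fun t => (1 + Real.exp (l * (t - d - δ / 2)))⁻¹ := by
    funext t; rw [hσ, one_div]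
  -- derivative of σ at x₁
  have hσd : HasDerivAt σ (-(l * E) / (1 + E) ^ 2) x₁ := by
    rw [hσfun]
    have h0 : HasDerivAt (fun t : ℝ => l * (t - d - δ / 2)) (l * 1) x₁ :=
      (((hasDerivAt_id x₁).sub_const d).sub_const (δ / 2)).const_mul l
    have h1 : HasDerivAt (fun t : ℝ => 1 + Real.exp (l * (t - d - δ / 2))) (E * (l * 1)) x₁ :=
      (h0.exp).const_add 1
    have h2 : HasDerivAt (fun t : ℝ => (1 + Real.exp (l * (t - d - δ / 2)))⁻¹)
        (-(E * (l * 1)) / (1 + Real.exp (l * (x₁ - d - δ / 2))) ^ 2) x₁ := h1.inv hden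
    convert h2 using 1
    rw [← hE]
    ring
  -- derivative of x₁ ↦ W x₁ x₂
  have hq : HasDerivAt (fun t : ℝ => (p₁₁ * t ^ 2 + 2 * p₁₂ * t * x₂ + p₂₂ * x₂ ^ 2) / 2)
      (p₁₁ * x₁ + p₁₂ * x₂) x₁ := by
    have h3 : (fun t : ℝ => (p₁₁ * t ^ 2 + 2 * p₁₂ * t * x₂ + p₂₂ * x₂ ^ 2) / 2)
        = fun t => (p₁₁ * t ^ 2 + (2 * p₁₂ * x₂) * t + p₂₂ * x₂ ^ 2) / 2 := by
      funext t; ring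
    rw [h3]
    have h4 : HasDerivAt (fun t : ℝ => (p₁₁ * t ^ 2 + (2 * p₁₂ * x₂) * t + p₂₂ * x₂ ^ 2) / 2)
        ((p₁₁ * (((2 : ℕ) : ℝ) * x₁ ^ (2 - 1)) + 2 * p₁₂ * x₂ * 1) / 2) x₁ := ((((hasDerivAt_pow 2 x₁).const_mul p₁₁).add
      ((hasDerivAt_id x₁).const_mul (2 * p₁₂ * x₂))).add_const (p₂₂ * x₂ ^ 2)).div_const 2
    convert h4 using 1
    push_cast
    ring
  have hW1 : HasDerivAt (fun t => W t x₂)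
      ((θ * (-(l * E) / (1 + E) ^ 2)) *
        ((p₁₁ * x₁ ^ 2 + 2 * p₁₂ * x₁ * x₂ + p₂₂ * x₂ ^ 2) / 2)
       + (1 + θ * σ x₁) * (p₁₁ * x₁ + p₁₂ * x₂)) x₁ := by
    have hfun : (fun t => W t x₂) = fun t =>
        (1 + θ * σ t) * ((p₁₁ * t ^ 2 + 2 * p₁₂ * t * x₂ + p₂₂ * x₂ ^ 2) / 2) - k := by
      funext t; rw [hW]
    rw [hfun]
    exact (((hσd.const_mul θ).const_add 1).mul hq).sub_const k
  -- derivative of x₂ ↦ W x₁ x₂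
  have hW2 : HasDerivAt (fun t => W x₁ t) ((1 + θ * σ x₁) * (p₁₂ * x₁ + p₂₂ * x₂)) x₂ := by
    have hfun : (fun t => W x₁ t) = fun t =>
        (1 + θ * σ x₁) * ((p₁₁ * x₁ ^ 2 + 2 * p₁₂ * x₁ * t + p₂₂ * t ^ 2) / 2) - k := by
      funext t; rw [hW]
    rw [hfun]
    have h3 : (fun t : ℝ => (p₁₁ * x₁ ^ 2 + 2 * p₁₂ * x₁ * t + p₂₂ * t ^ 2) / 2)
        = fun t => (p₂₂ * t ^ 2 + (2 * p₁₂ * x₁) * t + p₁₁ * x₁ ^ 2) / 2 := by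
      funext t; ring
    have h4 : HasDerivAt (fun t : ℝ => (p₂₂ * t ^ 2 + (2 * p₁₂ * x₁) * t + p₁₁ * x₁ ^ 2) / 2)
        ((p₂₂ * (((2 : ℕ) : ℝ) * x₂ ^ (2 - 1)) + 2 * p₁₂ * x₁ * 1) / 2) x₂ := ((((hasDerivAt_pow 2 x₂).const_mul p₂₂).add
      ((hasDerivAt_id x₂).const_mul (2 * p₁₂ * x₁))).add_const (p₁₁ * x₁ ^ 2)).div_const 2
    have h5 : HasDerivAt (fun t : ℝ => (p₁₁ * x₁ ^ 2 + 2 * p₁₂ * x₁ * t + p₂₂ * t ^ 2) / 2)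
        (p₁₂ * x₁ + p₂₂ * x₂) x₂ := by
      rw [h3]; convert h4 using 1; push_cast; ring
    exact ((h5.const_mul (1 + θ * σ x₁)).sub_const k)
  have hzero : p₁₂ * x₁ + p₂₂ * x₂ = 0 := by
    rw [hx₂]; field_simp; ring
  have hd2 : deriv (fun t => W x₁ t) x₂ = 0 := by
    rw [hW2.deriv, hzero, mul_zero]
  have hsx : σ x₁ = 1 / (1 + E) := by rw [hσ]
  have key : (deriv (fun t => W t x₂) x₁) * x₂ + (deriv (fun t => W x₁ t) x₂) * f x₁ x₂ =
      -(p₁₂ * (p₁₁ * p₂₂ - p₁₂ ^ 2) / p₂₂ ^ 2) * x₁ ^ 2 *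
        (θ * σ x₁ * (1 - (l / 2) * (1 - σ x₁) * x₁) + 1) := by
    rw [hd2, zero_mul, add_zero, hW1.deriv, hsx, hx₂]
    field_simp
    ring
  refine ⟨key, fun hx₁ hbr => ?_⟩
  rw [key]
  have hs : 0 < σ x₁ := by rw [hsx]; positivity
  have hB : 0 < θ * σ x₁ * (1 - (l / 2) * (1 - σ x₁) * x₁) + 1 := by
    have := mul_pos (mul_pos hθ hs) hbr
    linarith
  have hC : 0 < p₁₂ * (p₁₁ * p₂₂ - p₁₂ ^ 2) / p₂₂ ^ 2 := by positivity
  have hx2 : 0 < x₁ ^ 2 := by positivity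
  have : 0 < p₁₂ * (p₁₁ * p₂₂ - p₁₂ ^ 2) / p₂₂ ^ 2 * x₁ ^ 2 *
      (θ * σ x₁ * (1 - (l / 2) * (1 - σ x₁) * x₁) + 1) := by positivity
  linarith
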